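/- arXiv:1201.5046 — 2 statements merged into one kernel-verified Lean document; each statement's English description precedes it below -/
import Mathlib

section
/- Any configuration (y_1,...,y_n) ∈ {0,1}^n produced by the backward sampling transition probabilities has probability ∏_{i: y_i=1} π_i · ∏_{i: y_i=0} (1-π_i) / B_0(0) if ∑ y_i = n_1, and probability 0 otherwise. -/
open scoped Classical
open Finset

/-- Product Bernoulli weight of a configuration: individual `i+1` (1-based) has
probability `π (i+1)` of being a case (`true`). -/
noncomputable def wgt (n : ℕ) (π : ℕ → ℝ) (y : Fin n → Bool) : ℝ :=
  ∏ i : Fin n, if y i then π (i.1 + 1) else 1 - π (i.1 + 1)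

/-- Probability of an event under the product Bernoulli law. -/
noncomputable def prb (n : ℕ) (π : ℕ → ℝ) (E : (Fin n → Bool) → Prop) : ℝ :=
  ∑ y : Fin n → Bool, if E y then wgt n π y else 0

/-- Partial sum `Z_j = Y_1 + ... + Y_j`. -/
def zsum (n : ℕ) (y : Fin n → Bool) (j : ℕ) : ℤ :=
  ((Finset.univ.filter (fun i : Fin n => i.1 < j ∧ y i)).card : ℤ)

/-- Tail sum `Y_{i+1} + ... + Y_n`. -/
def tcnt (n : ℕ) (y : Fin n → Bool) (i : ℕ) : ℤ :=
  ((Finset.univ.filter (fun k : Fin n => i ≤ k.1 ∧ y k)).card : ℤ)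

/-- Forward quantity `F_i(m) = P(Z_i = m)`. -/
noncomputable def fwd (n : ℕ) (π : ℕ → ℝ) (i : ℕ) (m : ℤ) : ℝ :=
  prb n π (fun y => zsum n y i = m)

/-- Backward quantity `B_i(m) = P(Y_{i+1} + ... + Y_n = n1 - m)`. -/
noncomputable def bwd (n : ℕ) (π : ℕ → ℝ) (n1 : ℤ) (i : ℕ) (m : ℤ) : ℝ :=
  prb n π (fun y => tcnt n y i = n1 - m)


lemma sum_wgt (n : ℕ) (π : ℕ → ℝ) : ∑ y : Fin n → Bool, wgt n π y = 1 := by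
  unfold wgt
  rw [← Fintype.piFinset_univ]
  rw [Finset.sum_prod_piFinset (Finset.univ : Finset Bool)
    (fun (i : Fin n) (b : Bool) => if b then π (i.1 + 1) else 1 - π (i.1 + 1))]
  simp

lemma zsum_zero (n : ℕ) (y : Fin n → Bool) : zsum n y 0 = 0 := by simp [zsum]

lemma zsum_succ (n : ℕ) (y : Fin n → Bool) (j : ℕ) (hj : j < n) :
    zsum n y (j + 1) = zsum n y j + (if y ⟨j, hj⟩ then 1 else 0) := by
  unfold zsum
  have h : (univ.filter (fun i : Fin n => i.1 < j + 1 ∧ y i)) =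
      (univ.filter (fun i : Fin n => i.1 < j ∧ y i)) ∪
      (univ.filter (fun i : Fin n => i.1 = j ∧ y i)) := by
    ext i
    simp only [mem_filter, mem_union, mem_univ, true_and]
    constructor
    · rintro ⟨h1, h2⟩
      rcases Nat.lt_succ_iff_lt_or_eq.mp h1 with h | h
      · exact Or.inl ⟨h, h2⟩
      · exact Or.inr ⟨h, h2⟩
    · rintro (⟨h1, h2⟩ | ⟨h1, h2⟩) <;> exact ⟨by omega, h2⟩
  have hd : Disjoint (univ.filter (fun i : Fin n => i.1 < j ∧ y i))
      (univ.filter (fun i : Fin n => i.1 = j ∧ y i)) := by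
    rw [Finset.disjoint_left]
    intro k hk1 hk2
    simp only [mem_filter] at hk1 hk2
    omega
  have h2 : (univ.filter (fun i : Fin n => i.1 = j ∧ y i)) =
      if y ⟨j, hj⟩ then {(⟨j, hj⟩ : Fin n)} else ∅ := by
    split_ifs with hy
    · ext i
      simp only [mem_filter, mem_univ, true_and, mem_singleton]
      constructor
      · rintro ⟨h1, _⟩; exact Fin.ext h1
      · rintro rfl; exact ⟨rfl, hy⟩
    · ext i
      simp only [mem_filter, mem_univ, true_and, Finset.notMem_empty, iff_false]
      rintro ⟨h1, h2⟩
      exact hy (by have : i = ⟨j, hj⟩ := Fin.ext h1; rwa [this] at h2)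
  rw [h, Finset.card_union_of_disjoint hd, h2]
  split_ifs <;> simp

lemma tcnt_n (n : ℕ) (y : Fin n → Bool) : tcnt n y n = 0 := by
  unfold tcnt
  have h : (univ.filter (fun k : Fin n => n ≤ k.1 ∧ y k)) = ∅ := by
    ext k
    simp only [mem_filter, mem_univ, true_and, Finset.notMem_empty, iff_false]
    rintro ⟨h1, _⟩
    exact absurd k.2 (by omega)
  rw [h]
  simp
  
lemma tcnt_eq (n : ℕ) (y : Fin n → Bool) (i : ℕ) (hi : i ≤ n) :
    tcnt n y i = zsum n y n - zsum n y i := by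
  unfold tcnt zsum
  have h : (univ.filter (fun k : Fin n => k.1 < n ∧ y k)) =
      (univ.filter (fun k : Fin n => k.1 < i ∧ y k)) ∪
      (univ.filter (fun k : Fin n => i ≤ k.1 ∧ y k)) := by
    ext k
    simp only [mem_filter, mem_union, mem_univ, true_and]
    constructor
    · rintro ⟨_, h2⟩
      rcases Nat.lt_or_ge k.1 i with h | h
      · exact Or.inl ⟨h, h2⟩
      · exact Or.inr ⟨h, h2⟩
    · rintro (⟨h1, h2⟩ | ⟨h1, h2⟩) <;> exact ⟨k.2, h2⟩
  have hd : Disjoint (univ.filter (fun k : Fin n => k.1 < i ∧ y k))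
      (univ.filter (fun k : Fin n => i ≤ k.1 ∧ y k)) := by
    rw [Finset.disjoint_left]
    intro k hk1 hk2
    simp only [mem_filter] at hk1 hk2
    omega
  rw [h, Finset.card_union_of_disjoint hd]
  push_cast
  ring

lemma bwd_n (n : ℕ) (π : ℕ → ℝ) (n1 : ℤ) (m : ℤ) :
    bwd n π n1 n m = if m = n1 then 1 else 0 := by
  unfold bwd prb
  split_ifs with hm
  · rw [← sum_wgt n π]
    refine Finset.sum_congr rfl fun y _ => ?_
    rw [if_pos (by show tcnt n y n = n1 - m; rw [tcnt_n, hm]; ring)]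
  · refine Finset.sum_eq_zero fun y _ => ?_
    rw [if_neg (by show ¬ tcnt n y n = n1 - m; rw [tcnt_n]; omega)]

lemma wgt_pos (n : ℕ) (π : ℕ → ℝ) (hπ : ∀ i, 1 ≤ i → i ≤ n → 0 < π i ∧ π i < 1)
    (y : Fin n → Bool) : 0 < wgt n π y := by
  unfold wgt
  refine Finset.prod_pos fun i _ => ?_
  have h := hπ (i.1 + 1) (by omega) (by have := i.2; omega)
  split_ifs
  · exact h.1
  · linarith [h.2]

lemma wgt_nonneg (n : ℕ) (π : ℕ → ℝ) (hπ : ∀ i, 1 ≤ i → i ≤ n → 0 < π i ∧ π i < 1)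
    (y : Fin n → Bool) : 0 ≤ wgt n π y := le_of_lt (wgt_pos n π hπ y)

lemma bwd_pos (n : ℕ) (π : ℕ → ℝ) (n1 : ℤ) (hπ : ∀ i, 1 ≤ i → i ≤ n → 0 < π i ∧ π i < 1)
    (y : Fin n → Bool) (hy : zsum n y n = n1) (i : ℕ) (hi : i ≤ n) :
    0 < bwd n π n1 i (zsum n y i) := by
  unfold bwd prb
  have hmem : y ∈ (Finset.univ : Finset (Fin n → Bool)) := Finset.mem_univ y
  calc (0 : ℝ) < wgt n π y := wgt_pos n π hπ y
    _ = (if tcnt n y i = n1 - zsum n y i then wgt n π y else 0) := by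
        rw [if_pos (by rw [tcnt_eq n y i hi, hy])]
    _ ≤ _ := by
        have key := Finset.single_le_sum
          (f := fun z => if tcnt n z i = n1 - zsum n y i then wgt n π z else 0)
          (fun z _ => by
            by_cases hc : tcnt n z i = n1 - zsum n y i
            · simpa [hc] using wgt_nonneg n π hπ z
            · simp [hc]) hmem
        refine le_of_le_of_eq key (Finset.sum_congr rfl fun z _ => ?_)
        by_cases hc : tcnt n z i = n1 - zsum n y i <;> simp [hc]
  
lemma tele (g c : ℕ → ℝ) : ∀ n : ℕ, (∀ i, i ≤ n → g i ≠ 0) →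
    ∏ i ∈ Finset.range n, (c i * g (i + 1) / g i) =
      (∏ i ∈ Finset.range n, c i) * g n / g 0 := by
  intro n
  induction n with
  | zero => intro h; have h0 := h 0 (le_refl 0); simp [div_self h0]
  | succ m ih =>
    intro h
    rw [Finset.prod_range_succ, Finset.prod_range_succ,
      ih (fun i hi => h i (by omega))]
    have hm : g m ≠ 0 := h m (by omega)
    have h0 : g 0 ≠ 0 := h 0 (by omega)
    field_simp

/-- The law of the heterogeneous Markov chain generated by backward sampling:
product over individuals of the transition probabilities
`π_i·B_i(Z_{i-1}+1)/B_{i-1}(Z_{i-1})` (case) and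
`(1-π_i)·B_i(Z_{i-1})/B_{i-1}(Z_{i-1})` (control). -/
noncomputable def sampLaw (n : ℕ) (π : ℕ → ℝ) (n1 : ℤ) (y : Fin n → Bool) : ℝ :=
  ∏ i : Fin n,
    if y i then
      π (i.1 + 1) * bwd n π n1 (i.1 + 1) (zsum n y i.1 + 1) / bwd n π n1 i.1 (zsum n y i.1)
    else
      (1 - π (i.1 + 1)) * bwd n π n1 (i.1 + 1) (zsum n y i.1) / bwd n π n1 i.1 (zsum n y i.1)

/-- Explicit formula for the probability of a configuration under backward
sampling: `∏_{i : y_i = 1} π_i · ∏_{i : y_i = 0} (1 - π_i) / B_0(0)` if the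
configuration has exactly `n1` cases, and `0` otherwise. -/
theorem backward_sampling_configuration_probability (n : ℕ) (π : ℕ → ℝ) (n1 : ℤ)
    (hπ : ∀ i, 1 ≤ i → i ≤ n → 0 < π i ∧ π i < 1)
    (hn1 : 0 ≤ n1 ∧ n1 ≤ (n : ℤ)) (hB : 0 < bwd n π n1 0 0) :
    ∀ y : Fin n → Bool,
      sampLaw n π n1 y =
        if zsum n y n = n1 then
          (∏ i ∈ Finset.univ.filter (fun i : Fin n => y i = true), π (i.1 + 1)) *
            (∏ i ∈ Finset.univ.filter (fun i : Fin n => y i = false), (1 - π (i.1 + 1))) /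
            bwd n π n1 0 0
        else 0 := by
  intro y
  by_cases h : zsum n y n = n1
  · rw [if_pos h]
    set g : ℕ → ℝ := fun j => bwd n π n1 j (zsum n y j) with hg
    set c : ℕ → ℝ := fun j =>
      if hj : j < n then (if y ⟨j, hj⟩ then π (j + 1) else 1 - π (j + 1)) else 1 with hc
    have hgne : ∀ i, i ≤ n → g i ≠ 0 := fun i hi => ne_of_gt (bwd_pos n π n1 hπ y h i hi)
    have hterm : ∀ i : Fin n,
        (if y i then
          π (i.1 + 1) * bwd n π n1 (i.1 + 1) (zsum n y i.1 + 1) / bwd n π n1 i.1 (zsum n y i.1)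
        else
          (1 - π (i.1 + 1)) * bwd n π n1 (i.1 + 1) (zsum n y i.1) /
            bwd n π n1 i.1 (zsum n y i.1)) =
        c i.1 * g (i.1 + 1) / g i.1 := by
      intro i
      have hz := zsum_succ n y i.1 i.2
      have heta : (⟨i.1, i.2⟩ : Fin n) = i := rfl
      rw [heta] at hz
      by_cases hy : y i
      · rw [if_pos hy, hg, hc]
        simp only [dif_pos i.2, heta, if_pos hy, hz]
      · rw [if_neg hy, hg, hc]
        simp only [dif_pos i.2, heta, if_neg hy, hz]
        rw [add_zero]
    have step1 : sampLaw n π n1 y = ∏ i ∈ Finset.range n, (c i * g (i + 1) / g i) := by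
      unfold sampLaw
      rw [Finset.prod_congr rfl (fun i _ => hterm i)]
      exact Fin.prod_univ_eq_prod_range (fun j => c j * g (j + 1) / g j) n
    rw [step1, tele g c n hgne]
    have hgn : g n = 1 := by
      rw [hg]
      simp only [h]
      rw [bwd_n, if_pos rfl]
    have hg0 : g 0 = bwd n π n1 0 0 := by rw [hg]; simp only [zsum_zero]
    have hcprod : ∏ i ∈ Finset.range n, c i =
        (∏ i ∈ Finset.univ.filter (fun i : Fin n => y i = true), π (i.1 + 1)) *
          (∏ i ∈ Finset.univ.filter (fun i : Fin n => y i = false), (1 - π (i.1 + 1))) := by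
      rw [← Fin.prod_univ_eq_prod_range c n]
      have : ∀ i : Fin n, c i.1 = if y i then π (i.1 + 1) else 1 - π (i.1 + 1) := by
        intro i
        rw [hc]
        simp only [dif_pos i.2]
      rw [Finset.prod_congr rfl (fun i _ => this i)]
      rw [Finset.prod_ite]
      have e1 : Finset.univ.filter (fun i : Fin n => y i) =
          Finset.univ.filter (fun i : Fin n => y i = true) := by
        apply Finset.filter_congr; intro i _; simp
      have e2 : Finset.univ.filter (fun i : Fin n => ¬ y i) =
          Finset.univ.filter (fun i : Fin n => y i = false) := by
        apply Finset.filter_congr; intro i _; simp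
      rw [e1, e2]
    rw [hgn, hg0, hcprod, mul_one]
  · rw [if_neg h]
    obtain ⟨m, rfl⟩ : ∃ m, n = m + 1 := by
      cases n with
      | zero =>
        exfalso
        apply h
        have : n1 = 0 := by omega
        rw [this, zsum_zero]
      | succ m => exact ⟨m, rfl⟩
    unfold sampLaw
    apply Finset.prod_eq_zero (Finset.mem_univ (Fin.last m))
    have hz := zsum_succ (m + 1) y m (by omega)
    have heta : (⟨m, by omega⟩ : Fin (m + 1)) = Fin.last m := rfl
    rw [heta] at hz
    have hval : (Fin.last m).1 = m := rfl
    by_cases hy : y (Fin.last m)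
    · rw [if_pos hy, hval]
      rw [if_pos hy] at hz
      have hne : zsum (m + 1) y m + 1 ≠ n1 := by rw [← hz]; exact h
      rw [bwd_n, if_neg hne]
      simp
    · rw [if_neg hy, hval]
      rw [if_neg hy, add_zero] at hz
      have hne : zsum (m + 1) y m ≠ n1 := by rw [← hz]; exact h
      rw [bwd_n, if_neg hne]
      simp
end

section
/- The unnormalized conditional marginals satisfy P(Y_i = 1 | C) = (∑_m F_{i-1}(m)·π_i·B_i(m+1)) / P(C) and P(Y_i = 0 | C) = (∑_m F_{i-1}(m)·(1-π_i)·B_i(m)) / P(C), where C = {Z_n = n_1}. -/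
open scoped Classical
open Finset

/-! ### Auxiliary lemmas -/

noncomputable def wfac (n : ℕ) (π : ℕ → ℝ) (k : Fin n) (b : Bool) : ℝ :=
  if b then π (k.1 + 1) else 1 - π (k.1 + 1)

theorem ite_inst_congr {α : Sort*} {c d : Prop} {i1 : Decidable c} {i2 : Decidable d}
    {a b : α} (h : c ↔ d) : @ite α c i1 a b = @ite α d i2 a b := by
  have hcd : c = d := propext h
  subst hcd
  cases Subsingleton.elim i1 i2
  rfl

lemma wgt_eq (n : ℕ) (π : ℕ → ℝ) (y : Fin n → Bool) :
    wgt n π y = ∏ k, wfac n π k (y k) := rfl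
lemma wfac_sum (n : ℕ) (π : ℕ → ℝ) (k : Fin n) :
    wfac n π k true + wfac n π k false = 1 := by simp [wfac]
lemma sum_prod_bool {I : Type*} [Fintype I] [DecidableEq I] (g : I → Bool → ℝ) :
    ∑ y : I → Bool, ∏ k, g k (y k) = ∏ k, (g k true + g k false) := by
  classical
  have h := Finset.prod_univ_sum (fun _ : I => (Finset.univ : Finset Bool)) (fun k b => g k b)
  rw [Fintype.piFinset_univ] at h
  rw [← h]
  exact Finset.prod_congr rfl fun k _ => by rw [Fintype.sum_bool]

lemma prb_factor (n : ℕ) (π : ℕ → ℝ) (p : Fin n → Prop)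
    (E₁ E₂ : (Fin n → Bool) → Prop)
    (h₁ : ∀ y y' : Fin n → Bool, (∀ k, p k → y k = y' k) → (E₁ y ↔ E₁ y'))
    (h₂ : ∀ y y' : Fin n → Bool, (∀ k, ¬ p k → y k = y' k) → (E₂ y ↔ E₂ y')) :
    prb n π (fun y => E₁ y ∧ E₂ y) = prb n π E₁ * prb n π E₂ := by
  classical
  set e := (Equiv.piEquivPiSubtypeProd p (fun _ : Fin n => Bool)) with he
  set A : ({k // p k} → Bool) → Prop := fun a => E₁ (e.symm (a, fun _ => false)) with hA
  set B : ({k // ¬ p k} → Bool) → Prop := fun b => E₂ (e.symm (fun _ => false, b)) with hB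
  set WA : ({k // p k} → Bool) → ℝ := fun a => ∏ k : {k // p k}, wfac n π k.1 (a k) with hWA
  set WB : ({k // ¬ p k} → Bool) → ℝ := fun b => ∏ k : {k // ¬ p k}, wfac n π k.1 (b k) with hWB
  have hEA : ∀ a b, E₁ (e.symm (a, b)) ↔ A a := by
    intro a b
    rw [hA]
    apply h₁
    intro k hk
    simp only [he, Equiv.piEquivPiSubtypeProd_symm_apply]
    rw [dif_pos hk, dif_pos hk]
  have hEB : ∀ a b, E₂ (e.symm (a, b)) ↔ B b := by
    intro a b
    rw [hB]
    apply h₂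
    intro k hk
    simp only [he, Equiv.piEquivPiSubtypeProd_symm_apply]
    rw [dif_neg hk, dif_neg hk]
  have hwgt : ∀ a b, wgt n π (e.symm (a, b)) = WA a * WB b := by
    intro a b
    rw [wgt_eq, ← Fintype.prod_subtype_mul_prod_subtype p (fun k => wfac n π k (e.symm (a, b) k))]
    congr 1
    · refine Finset.prod_congr rfl fun k _ => ?_
      congr 1
      simp only [he, Equiv.piEquivPiSubtypeProd_symm_apply]
      rw [dif_pos k.2]
    · refine Finset.prod_congr rfl fun k _ => ?_
      congr 1
      simp only [he, Equiv.piEquivPiSubtypeProd_symm_apply]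
      rw [dif_neg k.2]
  have key : ∀ (E : (Fin n → Bool) → Prop),
      prb n π E = ∑ a, ∑ b, (if E (e.symm (a, b)) then WA a * WB b else 0) := by
    intro E
    unfold prb
    rw [← Equiv.sum_comp e.symm (fun y => if E y then wgt n π y else 0),
      Fintype.sum_prod_type]
    exact Finset.sum_congr rfl fun a _ => Finset.sum_congr rfl fun b _ => by
      by_cases h : E (e.symm (a, b)) <;> simp [h, hwgt a b]
  have hWA1 : ∑ a, WA a = 1 := by
    rw [hWA, sum_prod_bool (fun (k : {k // p k}) (c : Bool) => wfac n π k.1 c),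
      Finset.prod_congr rfl fun (k : {k // p k}) _ => wfac_sum n π k.1]
    simp
  have hWB1 : ∑ b, WB b = 1 := by
    rw [hWB, sum_prod_bool (fun (k : {k // ¬ p k}) (c : Bool) => wfac n π k.1 c),
      Finset.prod_congr rfl fun (k : {k // ¬ p k}) _ => wfac_sum n π k.1]
    simp
  have e1 : prb n π (fun y => E₁ y ∧ E₂ y)
      = (∑ a, if A a then WA a else 0) * (∑ b, if B b then WB b else 0) := by
    rw [key (fun y => E₁ y ∧ E₂ y), Finset.sum_mul_sum]
    refine Finset.sum_congr rfl fun a _ => Finset.sum_congr rfl fun b _ => ?_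
    simp only [hEA a b, hEB a b]
    by_cases ha : A a <;> by_cases hb : B b <;> simp [ha, hb]
  have e2 : prb n π E₁ = (∑ a, if A a then WA a else 0) * (∑ b, WB b) := by
    rw [key E₁, Finset.sum_mul_sum]
    refine Finset.sum_congr rfl fun a _ => Finset.sum_congr rfl fun b _ => ?_
    simp only [hEA a b]
    by_cases ha : A a <;> simp [ha]
  have e3 : prb n π E₂ = (∑ a, WA a) * (∑ b, if B b then WB b else 0) := by
    rw [key E₂, Finset.sum_mul_sum]
    refine Finset.sum_congr rfl fun a _ => Finset.sum_congr rfl fun b _ => ?_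
    simp only [hEB a b]
    by_cases hb : B b <;> simp [hb]
  rw [e1, e2, e3, hWA1, hWB1]
  ring

lemma prb_congr (n : ℕ) (π : ℕ → ℝ) (E E' : (Fin n → Bool) → Prop)
    (h : ∀ y, E y ↔ E' y) : prb n π E = prb n π E' :=
  Finset.sum_congr rfl fun y _ => ite_inst_congr (h y)

lemma zsum_nonneg (n : ℕ) (y : Fin n → Bool) (j : ℕ) : 0 ≤ zsum n y j :=
  Int.natCast_nonneg _

lemma zsum_le (n : ℕ) (y : Fin n → Bool) (j : ℕ) : zsum n y j ≤ (j : ℤ) := by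
  unfold zsum
  have h : ((Finset.univ.filter (fun k : Fin n => k.1 < j ∧ y k)).card) ≤ j := by
    calc (Finset.univ.filter (fun k : Fin n => k.1 < j ∧ y k)).card
        = ((Finset.univ.filter (fun k : Fin n => k.1 < j ∧ y k)).image Fin.val).card :=
          (Finset.card_image_of_injective _ Fin.val_injective).symm
      _ ≤ (Finset.range j).card := by
          apply Finset.card_le_card
          intro x hx
          simp only [Finset.mem_image, Finset.mem_filter, Finset.mem_univ, true_and] at hx
          obtain ⟨k, ⟨hk, _⟩, rfl⟩ := hx
          exact Finset.mem_range.2 hk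
      _ = j := Finset.card_range j
  exact_mod_cast h

lemma zsum_congr (n : ℕ) (y y' : Fin n → Bool) (j J : ℕ) (hjJ : j ≤ J)
    (h : ∀ k : Fin n, k.1 < J → y k = y' k) : zsum n y j = zsum n y' j := by
  unfold zsum
  have : (Finset.univ.filter (fun k : Fin n => k.1 < j ∧ y k))
      = (Finset.univ.filter (fun k : Fin n => k.1 < j ∧ y' k)) := by
    apply Finset.filter_congr
    intro k _
    by_cases hk : k.1 < j
    · rw [h k (lt_of_lt_of_le hk hjJ)]
    · simp [hk]
  rw [this]

lemma tcnt_congr (n : ℕ) (y y' : Fin n → Bool) (i : ℕ)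
    (h : ∀ k : Fin n, i ≤ k.1 → y k = y' k) : tcnt n y i = tcnt n y' i := by
  unfold tcnt
  have : (Finset.univ.filter (fun k : Fin n => i ≤ k.1 ∧ y k))
      = (Finset.univ.filter (fun k : Fin n => i ≤ k.1 ∧ y' k)) := by
    apply Finset.filter_congr
    intro k _
    by_cases hk : i ≤ k.1
    · rw [h k hk]
    · simp [hk]
  rw [this]

lemma prb_coord (n : ℕ) (π : ℕ → ℝ) (j : Fin n) (b : Bool) :
    prb n π (fun y => y j = b) = wfac n π j b := by
  classical
  set g : Fin n → Bool → ℝ := fun k c =>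
    if k = j then (if c = b then wfac n π k c else 0) else wfac n π k c with hg
  have h0 : ∀ y : Fin n → Bool, (if y j = b then wgt n π y else 0) = ∏ k, g k (y k) := by
    intro y
    by_cases h : y j = b
    · rw [if_pos h, wgt_eq]
      refine Finset.prod_congr rfl fun k _ => ?_
      simp only [hg]
      by_cases hk : k = j
      · subst hk; simp [h]
      · simp [hk]
    · rw [if_neg h]
      symm
      apply Finset.prod_eq_zero (Finset.mem_univ j)
      simp [hg, h]
  have h1 : prb n π (fun y => y j = b) = ∑ y : Fin n → Bool, ∏ k, g k (y k) :=
    Finset.sum_congr rfl fun y _ => Eq.trans (ite_inst_congr Iff.rfl) (h0 y)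
  rw [h1, sum_prod_bool g, Finset.prod_eq_single j]
  · simp only [hg]; cases b <;> simp
  · intro k _ hk
    simp only [hg, if_neg hk]
    exact wfac_sum n π k
  · simp

lemma zsum_decomp (n : ℕ) (y : Fin n → Bool) (i : ℕ) (hi1 : 1 ≤ i) (hi2 : i ≤ n)
    (j : Fin n) (hj : j.1 = i - 1) :
    zsum n y n = zsum n y (i - 1) + (if y j = true then 1 else 0) + tcnt n y i := by
  unfold zsum tcnt
  have hnat : (Finset.univ.filter (fun k : Fin n => k.1 < n ∧ y k)).card
      = (Finset.univ.filter (fun k : Fin n => k.1 < i - 1 ∧ y k)).card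
        + (if y j = true then 1 else 0)
        + (Finset.univ.filter (fun k : Fin n => i ≤ k.1 ∧ y k)).card := by
    rw [Finset.card_filter, Finset.card_filter, Finset.card_filter]
    have hmid : (if y j = true then 1 else 0)
        = ∑ k : Fin n, (if k.1 = i - 1 ∧ y k then 1 else 0) := by
      rw [Finset.sum_eq_single j]
      · by_cases h : y j <;> simp [h, hj]
      · intro k _ hk
        have hne : ¬ (k.1 = i - 1) := fun h => hk (Fin.ext (by rw [h, hj]))
        simp [hne]
      · simp
    rw [hmid, ← Finset.sum_add_distrib, ← Finset.sum_add_distrib]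
    apply Finset.sum_congr rfl
    intro k _
    have hk := k.2
    by_cases hy : y k = true
    · simp only [hy, eq_self_iff_true, and_true]
      split_ifs <;> omega
    · simp only [hy, Bool.false_eq_true, and_false, if_false]
  rw [hnat]
  push_cast
  ring

lemma prb_partition (n : ℕ) (π : ℕ → ℝ) (E : (Fin n → Bool) → Prop) (i' i : ℕ)
    (hb : ∀ y : Fin n → Bool, zsum n y i' < (i : ℤ)) :
    prb n π E = ∑ m ∈ Finset.range i, prb n π (fun y => zsum n y i' = (m : ℤ) ∧ E y) := by
  classical
  have hpt : ∀ y : Fin n → Bool, (if E y then wgt n π y else 0)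
      = ∑ m ∈ Finset.range i, (if zsum n y i' = (m : ℤ) ∧ E y then wgt n π y else 0) := by
    intro y
    by_cases hE : E y
    · rw [if_pos hE]
      have hz0 := zsum_nonneg n y i'
      have hzi := hb y
      rw [Finset.sum_eq_single (zsum n y i').toNat]
      · rw [if_pos ⟨by omega, hE⟩]
      · intro m _ hm
        rw [if_neg]
        rintro ⟨h1, -⟩
        exact hm (by omega)
      · intro hnm
        exact absurd (Finset.mem_range.2 (by omega)) hnm
    · simp [hE]
  calc prb n π E = ∑ y : Fin n → Bool,
        ∑ m ∈ Finset.range i, (if zsum n y i' = (m : ℤ) ∧ E y then wgt n π y else 0) :=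
        Finset.sum_congr rfl fun y _ => hpt y
    _ = ∑ m ∈ Finset.range i, ∑ y : Fin n → Bool,
        (if zsum n y i' = (m : ℤ) ∧ E y then wgt n π y else 0) := Finset.sum_comm
    _ = ∑ m ∈ Finset.range i, prb n π (fun y => zsum n y i' = (m : ℤ) ∧ E y) := by
        exact Finset.sum_congr rfl fun m _ =>
          Finset.sum_congr rfl fun y _ => ite_inst_congr Iff.rfl

/-- Conditional marginals of phenotype `i` given the constraint, expressed via
sums of forward and backward quantities. -/
theorem conditional_marginals (n : ℕ) (π : ℕ → ℝ) (n1 : ℤ)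
    (hπ : ∀ i, 0 ≤ π i ∧ π i ≤ 1)
    (i : ℕ) (hi1 : 1 ≤ i) (hi2 : i ≤ n)
    (hPC : 0 < prb n π (fun y => zsum n y n = n1)) :
    prb n π (fun y => y ⟨i - 1, by omega⟩ = true ∧ zsum n y n = n1) /
        prb n π (fun y => zsum n y n = n1)
      = (∑ m ∈ Finset.range i, fwd n π (i - 1) (m : ℤ) * π i * bwd n π n1 i ((m : ℤ) + 1)) /
          prb n π (fun y => zsum n y n = n1) ∧
    prb n π (fun y => y ⟨i - 1, by omega⟩ = false ∧ zsum n y n = n1) /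
        prb n π (fun y => zsum n y n = n1)
      = (∑ m ∈ Finset.range i, fwd n π (i - 1) (m : ℤ) * (1 - π i) * bwd n π n1 i (m : ℤ)) /
          prb n π (fun y => zsum n y n = n1) := by
  have hj : i - 1 < n := by omega
  have hjlt : ((⟨i - 1, hj⟩ : Fin n) : ℕ) < i := by exact (by omega : i - 1 < i)
  have hjnlt : ¬ (((⟨i - 1, hj⟩ : Fin n) : ℕ) < i - 1) := by
    exact (by omega : ¬ (i - 1 < i - 1))
  have hbound : ∀ y : Fin n → Bool, zsum n y (i - 1) < (i : ℤ) := by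
    intro y
    refine lt_of_le_of_lt (zsum_le n y (i - 1)) ?_
    have : (i - 1 : ℕ) < i := by omega
    exact_mod_cast this
  have main : ∀ (b : Bool),
      prb n π (fun y => y ⟨i - 1, hj⟩ = b ∧ zsum n y n = n1)
      = ∑ m ∈ Finset.range i, fwd n π (i - 1) (m : ℤ) * wfac n π ⟨i - 1, hj⟩ b *
          bwd n π n1 i ((m : ℤ) + (if b = true then 1 else 0)) := by
    intro b
    rw [prb_partition n π _ (i - 1) i hbound]
    refine Finset.sum_congr rfl fun m _ => ?_
    have hiff : ∀ y : Fin n → Bool,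
        (zsum n y (i - 1) = (m : ℤ) ∧ (y ⟨i - 1, hj⟩ = b ∧ zsum n y n = n1)) ↔
        ((zsum n y (i - 1) = (m : ℤ) ∧ y ⟨i - 1, hj⟩ = b) ∧
          tcnt n y i = n1 - ((m : ℤ) + (if b = true then 1 else 0))) := by
      intro y
      have hd := zsum_decomp n y i hi1 hi2 ⟨i - 1, hj⟩ rfl
      constructor
      · rintro ⟨h1, h2, h3⟩
        refine ⟨⟨h1, h2⟩, ?_⟩
        rw [h1, h2, h3] at hd
        cases b
        · simp only [Bool.false_eq_true, if_false] at hd ⊢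
          omega
        · simp only [if_true] at hd ⊢
          omega
      · rintro ⟨⟨h1, h2⟩, h3⟩
        refine ⟨h1, h2, ?_⟩
        rw [h1, h2] at hd
        cases b
        · simp only [Bool.false_eq_true, if_false] at hd h3
          omega
        · simp only [if_true] at hd h3
          omega
    have hc1 : ∀ y y' : Fin n → Bool, (∀ k : Fin n, (k : ℕ) < i → y k = y' k) →
        ((zsum n y (i - 1) = (m : ℤ) ∧ y ⟨i - 1, hj⟩ = b) ↔
         (zsum n y' (i - 1) = (m : ℤ) ∧ y' ⟨i - 1, hj⟩ = b)) := by
      intro y y' h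
      have hz := zsum_congr n y y' (i - 1) i (by omega) h
      have hj' := h ⟨i - 1, hj⟩ hjlt
      rw [hz, hj']
    have hc2 : ∀ y y' : Fin n → Bool, (∀ k : Fin n, ¬ ((k : ℕ) < i) → y k = y' k) →
        ((tcnt n y i = n1 - ((m : ℤ) + (if b = true then 1 else 0))) ↔
         (tcnt n y' i = n1 - ((m : ℤ) + (if b = true then 1 else 0)))) := by
      intro y y' h
      have ht := tcnt_congr n y y' i (fun k hk => h k (not_lt.2 hk))
      rw [ht]
    have hc3 : ∀ y y' : Fin n → Bool, (∀ k : Fin n, (k : ℕ) < i - 1 → y k = y' k) →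
        ((zsum n y (i - 1) = (m : ℤ)) ↔ (zsum n y' (i - 1) = (m : ℤ))) := by
      intro y y' h
      rw [zsum_congr n y y' (i - 1) (i - 1) le_rfl h]
    have hc4 : ∀ y y' : Fin n → Bool, (∀ k : Fin n, ¬ ((k : ℕ) < i - 1) → y k = y' k) →
        ((y ⟨i - 1, hj⟩ = b) ↔ (y' ⟨i - 1, hj⟩ = b)) := by
      intro y y' h
      rw [h ⟨i - 1, hj⟩ hjnlt]
    have hfac2 : prb n π (fun y => zsum n y (i - 1) = (m : ℤ) ∧ y ⟨i - 1, hj⟩ = b)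
        = fwd n π (i - 1) (m : ℤ) * wfac n π ⟨i - 1, hj⟩ b := by
      refine Eq.trans (prb_factor n π (fun k => (k : ℕ) < i - 1)
        (fun y => zsum n y (i - 1) = (m : ℤ)) (fun y => y ⟨i - 1, hj⟩ = b) hc3 hc4) ?_
      rw [prb_coord n π ⟨i - 1, hj⟩ b]
      rfl
    calc prb n π (fun y => zsum n y (i - 1) = (m : ℤ) ∧ (y ⟨i - 1, hj⟩ = b ∧ zsum n y n = n1))
        = prb n π (fun y => (zsum n y (i - 1) = (m : ℤ) ∧ y ⟨i - 1, hj⟩ = b) ∧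
            tcnt n y i = n1 - ((m : ℤ) + (if b = true then 1 else 0))) :=
          prb_congr n π _ _ hiff
      _ = prb n π (fun y => zsum n y (i - 1) = (m : ℤ) ∧ y ⟨i - 1, hj⟩ = b) *
            prb n π (fun y => tcnt n y i = n1 - ((m : ℤ) + (if b = true then 1 else 0))) :=
          prb_factor n π (fun k => (k : ℕ) < i)
            (fun y => zsum n y (i - 1) = (m : ℤ) ∧ y ⟨i - 1, hj⟩ = b)
            (fun y => tcnt n y i = n1 - ((m : ℤ) + (if b = true then 1 else 0))) hc1 hc2
      _ = fwd n π (i - 1) (m : ℤ) * wfac n π ⟨i - 1, hj⟩ b *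
            bwd n π n1 i ((m : ℤ) + (if b = true then 1 else 0)) := by rw [hfac2]; rfl
  have hwt : wfac n π ⟨i - 1, hj⟩ true = π i := by
    have h : π ((i : ℕ) - 1 + 1) = π i := by rw [Nat.sub_add_cancel hi1]
    simpa [wfac] using h
  have hwf : wfac n π ⟨i - 1, hj⟩ false = 1 - π i := by
    have h : π ((i : ℕ) - 1 + 1) = π i := by rw [Nat.sub_add_cancel hi1]
    simp [wfac, h]
  have hT : prb n π (fun y => y ⟨i - 1, hj⟩ = true ∧ zsum n y n = n1)
      = ∑ m ∈ Finset.range i, fwd n π (i - 1) (m : ℤ) * π i * bwd n π n1 i ((m : ℤ) + 1) :=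
    (main true).trans (Finset.sum_congr rfl fun m _ => by rw [hwt]; norm_num)
  have hF : prb n π (fun y => y ⟨i - 1, hj⟩ = false ∧ zsum n y n = n1)
      = ∑ m ∈ Finset.range i, fwd n π (i - 1) (m : ℤ) * (1 - π i) * bwd n π n1 i (m : ℤ) :=
    (main false).trans (Finset.sum_congr rfl fun m _ => by rw [hwf]; norm_num)
  exact ⟨congrArg (fun x => x / prb n π (fun y => zsum n y n = n1)) hT,
    congrArg (fun x => x / prb n π (fun y => zsum n y n = n1)) hF⟩
end
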